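/- arXiv:1607.04384 — 8 statements merged into one kernel-verified Lean document; each statement's English description precedes it below -/
import Mathlib

section
/- For any real numbers a_1,…,a_n and A_1,…,A_n, the determinant of the E_n-matrix equals ∏_{m=1}^n (A_m − a_m²). -/
open Finset

/-- The `E_n`-matrix generated by `a_1,…,a_n` and `A_1,…,A_n`:
an `(n+1)×(n+1)` real matrix with entry `(1,1) = 1`, entries `(1,j+1) = (j+1,1) = a_j`,
diagonal entries `(i+1,i+1) = A_i`, and off-diagonal entries `(i+1,j+1) = a_i * a_j` for `i ≠ j`. -/
def Emat {n : ℕ} (a A : Fin n → ℝ) : Matrix (Fin (n + 1)) (Fin (n + 1)) ℝ :=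
  Matrix.of fun i j =>
    Fin.cases
      (Fin.cases (1 : ℝ) (fun j' => a j') j)
      (fun i' => Fin.cases (a i') (fun j' => if i' = j' then A i' else a i' * a j') j)
      i

/-- Lower-triangular factor. -/
def EmatL {n : ℕ} (a : Fin n → ℝ) : Matrix (Fin (n + 1)) (Fin (n + 1)) ℝ :=
  Matrix.of fun i j =>
    Fin.cases (if j = 0 then (1 : ℝ) else 0)
      (fun i' => if j = 0 then a i' else if i'.succ = j then 1 else 0) i

/-- Upper-triangular factor. -/
def EmatU {n : ℕ} (a A : Fin n → ℝ) : Matrix (Fin (n + 1)) (Fin (n + 1)) ℝ :=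
  Matrix.of fun i j =>
    Fin.cases (Fin.cases (1 : ℝ) (fun j' => a j') j)
      (fun i' => if i'.succ = j then A i' - a i' ^ 2 else 0) i

lemma Emat_eq_mul {n : ℕ} (a A : Fin n → ℝ) :
    Emat a A = EmatL a * EmatU a A := by
  ext i j
  rw [Matrix.mul_apply, Fin.sum_univ_succ]
  induction i using Fin.cases with
  | zero =>
    simp [Emat, EmatL, EmatU, Fin.succ_ne_zero]
  | succ i' =>
    induction j using Fin.cases with
    | zero =>
      simp [Emat, EmatL, EmatU, Fin.succ_ne_zero]
    | succ j' =>
      simp only [Emat, EmatL, EmatU, Matrix.of_apply, Fin.cases_succ, Fin.cases_zero,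
        Fin.succ_ne_zero, if_false, Fin.succ_inj, ite_mul, one_mul, zero_mul]
      by_cases h : i' = j' <;> simp [h, Finset.sum_ite_eq] <;> ring

lemma EmatL_det {n : ℕ} (a : Fin n → ℝ) : (EmatL a).det = 1 := by
  rw [Matrix.det_of_lowerTriangular]
  · have : ∀ i : Fin (n + 1), EmatL a i i = 1 := by
      intro i
      induction i using Fin.cases with
      | zero => simp [EmatL]
      | succ i' => simp [EmatL, Fin.succ_ne_zero]
    simp [this]
  · intro i j hij
    have hij' : i < j := hij
    induction i using Fin.cases with
    | zero =>
      have hj : j ≠ 0 := Fin.pos_iff_ne_zero.mp hij'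
      simp [EmatL, hj]
    | succ i' =>
      have hj : j ≠ 0 := fun e => by simp [e] at hij'
      have h2 : i'.succ ≠ j := ne_of_lt hij'
      simp [EmatL, hj, h2]

lemma EmatU_det {n : ℕ} (a A : Fin n → ℝ) :
    (EmatU a A).det = ∏ m : Fin n, (A m - a m ^ 2) := by
  rw [Matrix.det_of_upperTriangular]
  · rw [Fin.prod_univ_succ]
    simp [EmatU]
  · intro i j hij
    have hij' : j < i := hij
    induction i using Fin.cases with
    | zero => exact absurd hij' (Fin.not_lt_zero _)
    | succ i' =>
      induction j using Fin.cases with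
      | zero => simp [EmatU, Fin.succ_ne_zero]
      | succ j' =>
        have h : i' ≠ j' := fun e => by subst e; exact lt_irrefl _ hij'
        simp [EmatU, Fin.succ_inj, h]

/-- The determinant of the `E_n`-matrix equals `∏_{m=1}^n (A_m − a_m²)`. -/
theorem Emat_det {n : ℕ} (a A : Fin n → ℝ) :
    (Emat a A).det = ∏ m : Fin n, (A m - a m ^ 2) := by
  rw [Emat_eq_mul, Matrix.det_mul, EmatL_det, EmatU_det, one_mul]
end

section
/- For any real numbers a_1,…,a_n and A_1,…,A_n, and any indices i, j with 1 ≤ i, j ≤ n and i ≠ j, the cofactor C_{i+1,j+1} of the E_n-matrix equals 0. -/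
open Finset

/-- The cofactor of the `(k,l)` entry of a square matrix: `(−1)^{k+l}` times the determinant of
the matrix obtained by deleting the `k`-th row and `l`-th column. -/
def cofactor {n : ℕ} (M : Matrix (Fin (n + 1)) (Fin (n + 1)) ℝ) (k l : Fin (n + 1)) : ℝ :=
  (-1 : ℝ) ^ ((k : ℕ) + (l : ℕ)) * (M.submatrix k.succAbove l.succAbove).det

/-- For `1 ≤ i, j ≤ n` with `i ≠ j`, the cofactor `C_{i+1,j+1}` of the `E_n`-matrix equals `0`. -/
theorem Emat_cofactor_succ_succ {n : ℕ} (a A : Fin n → ℝ) (i j : Fin n) (hij : i ≠ j) :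
    cofactor (Emat a A) i.succ j.succ = 0 := by
  haveI : NeZero n := ⟨i.pos.ne'⟩
  unfold cofactor
  set M := (Emat a A).submatrix i.succ.succAbove j.succ.succAbove with hM
  -- find the row index r of the submatrix corresponding to original row j.succ
  obtain ⟨r, hr⟩ : ∃ r : Fin n, i.succ.succAbove r = j.succ :=
    Fin.exists_succAbove_eq (by simpa using hij.symm)
  have h0 : i.succ.succAbove 0 = 0 := Fin.succ_succAbove_zero i
  have hr0 : r ≠ 0 := by
    intro h; rw [h, h0] at hr; exact (Fin.succ_ne_zero j) hr.symm
  -- row r of M equals a j • row 0 of M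
  have hrow : M r = a j • M 0 := by
    funext c
    have hc : j.succ.succAbove c ≠ j.succ := Fin.succAbove_ne _ _
    simp only [hM, Matrix.submatrix_apply, hr, h0, Pi.smul_apply, smul_eq_mul]
    cases' (j.succ.succAbove c).eq_zero_or_eq_succ with h h
    · rw [h]; simp [Emat]
    · obtain ⟨l, hl⟩ := h
      have hjl : j ≠ l := by
        rintro rfl; rw [hl] at hc; exact hc rfl
      rw [hl]; simp [Emat, hjl]
  have : M.det = 0 := by
    have h1 : M = M.updateRow r (a j • M 0) := by
      rw [← hrow, Matrix.updateRow_eq_self]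
    rw [h1, Matrix.det_updateRow_smul]
    rw [Matrix.det_updateRow_eq_zero hr0.symm]
    ring
  rw [this]; ring
end

section
/- For any real numbers a_1,…,a_n and A_1,…,A_n, and any index j with 1 ≤ j ≤ n, the cofactor C_{1,j+1} of the E_n-matrix equals −a_j · ∏_{k≠j} (A_k − a_k²), where the product is over k ∈ {1,…,n} with k ≠ j. -/
open Finset

/-- For `1 ≤ j ≤ n`, the cofactor `C_{1,j+1}` of the `E_n`-matrix equals
`−a_j · ∏_{k ≠ j} (A_k − a_k²)`. -/
theorem Emat_cofactor_one_succ {n : ℕ} (a A : Fin n → ℝ) (j : Fin n) :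
    cofactor (Emat a A) 0 j.succ = -a j * ∏ k ∈ Finset.univ.erase j, (A k - a k ^ 2) := by
  set d : Fin n → ℝ := fun k => A k - a k ^ 2 with hd
  set N : Matrix (Fin n) (Fin n) ℝ :=
    (Emat a A).submatrix (0 : Fin (n+1)).succAbove (j.succ).succAbove with hN
  set B : Matrix (Fin n) (Fin n) ℝ := (Matrix.diagonal d).updateCol j a with hB
  set v : Fin n → ℝ := fun k => if k = j then 1 else a k with hv
  set U : Matrix (Fin n) (Fin n) ℝ := (1 : Matrix (Fin n) (Fin n) ℝ).updateRow j v with hU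
  have hNBU : N.submatrix id ⇑(j.cycleRange) = B * U := by
    ext i k
    have hL : N.submatrix id ⇑(j.cycleRange) i k
        = Emat a A i.succ (Equiv.swap 0 j.succ k.succ) := by
      simp [hN, Matrix.submatrix_apply, Fin.succAbove_zero, ← Fin.succAbove_cycleRange]
    have hterm : ∀ l, B i l * U l k =
        (if l = j then a i * v k else 0) +
        (if l = k then (if i = k ∧ k ≠ j then d k else 0) else 0) := by
      intro l
      simp only [hB, hU, Matrix.updateCol_apply, Matrix.updateRow_apply, Matrix.one_apply,
        Matrix.diagonal_apply, hv]
      split_ifs <;> subst_vars <;> (try ring) <;> (exfalso; tauto)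
    have hR : (B * U) i k = a i * v k + (if i = k ∧ k ≠ j then d k else 0) := by
      rw [Matrix.mul_apply, Finset.sum_congr rfl (fun l _ => hterm l), Finset.sum_add_distrib]
      simp
    rw [hL, hR]
    rcases eq_or_ne k j with rfl | hkj
    · rw [Equiv.swap_apply_right]
      simp [Emat, hv]
    · rw [Equiv.swap_apply_of_ne_of_ne (Fin.succ_ne_zero k)
        (fun h => hkj (Fin.succ_injective _ h))]
      simp only [Emat, Matrix.of_apply, Fin.cases_succ, hv, if_neg hkj]
      rcases eq_or_ne i k with rfl | hik
      · simp [hkj, hd]; ring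
      · simp [hik]
  have hU2 : U = (Matrix.updateCol (1 : Matrix (Fin n) (Fin n) ℝ) j v).transpose := by
    rw [hU, ← Matrix.updateRow_transpose, Matrix.transpose_one]
  have hdetU : U.det = 1 := by
    rw [hU2, Matrix.det_transpose, ← Matrix.cramer_apply, Matrix.cramer_one]
    simp [hv]
  have hdetB : B.det = (∏ k ∈ Finset.univ.erase j, d k) * a j := by
    rw [hB, ← Matrix.cramer_apply, Matrix.cramer_eq_adjugate_mulVec,
      Matrix.adjugate_diagonal, Matrix.mulVec_diagonal]
  have hperm : ((Equiv.Perm.sign (j.cycleRange) : ℤ) : ℝ) * N.det = (B * U).det := by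
    rw [← hNBU, Matrix.det_permute']
  rw [Fin.sign_cycleRange] at hperm
  push_cast at hperm
  have h2 : ((-1 : ℝ)) ^ (j : ℕ) * ((-1 : ℝ)) ^ (j : ℕ) = 1 := by
    rw [← pow_add]; exact Even.neg_one_pow ⟨j, rfl⟩
  have hdetN : N.det = (-1 : ℝ) ^ (j : ℕ) * ((∏ k ∈ Finset.univ.erase j, d k) * a j) := by
    rw [Matrix.det_mul, hdetU, hdetB, mul_one] at hperm
    calc N.det = ((-1 : ℝ)) ^ (j : ℕ) * (((-1 : ℝ)) ^ (j : ℕ) * N.det) := by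
          rw [← mul_assoc, h2, one_mul]
      _ = _ := by rw [hperm]
  rw [cofactor, hdetN]
  have hjs : ((j.succ : Fin (n+1)) : ℕ) = (j : ℕ) + 1 := Fin.val_succ j
  rw [hjs, show ((0 : Fin (n+1)) : ℕ) = 0 from rfl, zero_add, pow_succ]
  calc ((-1:ℝ)) ^ (j:ℕ) * -1 * ((-1:ℝ) ^ (j:ℕ) * ((∏ k ∈ Finset.univ.erase j, d k) * a j))
      = (((-1:ℝ)) ^ (j:ℕ) * ((-1:ℝ)) ^ (j:ℕ)) * (-1 * ((∏ k ∈ Finset.univ.erase j, d k) * a j)) := by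
        ring
    _ = -a j * ∏ k ∈ Finset.univ.erase j, d k := by rw [h2]; ring
end

section
/- For any real numbers a_1,…,a_n and A_1,…,A_n, and any index i with 1 ≤ i ≤ n, the cofactor C_{i+1,1} of the E_n-matrix equals −a_i · ∏_{j≠i} (A_j − a_j²), where the product is over j ∈ {1,…,n} with j ≠ i. -/
open Finset

/-- For `1 ≤ i ≤ n`, the cofactor `C_{i+1,1}` of the `E_n`-matrix equals
`−a_i · ∏_{j ≠ i} (A_j − a_j²)`. -/
theorem Emat_cofactor_succ_one {n : ℕ} (a A : Fin n → ℝ) (i : Fin n) :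
    cofactor (Emat a A) i.succ 0 = -a i * ∏ j ∈ Finset.univ.erase i, (A j - a j ^ 2) := by
  rcases n with _ | m
  · exact i.elim0
  classical
  have hEs : ∀ k c : Fin (m + 1), Emat a A k.succ c.succ
      = if k = c then A k else a k * a c := by
    intro k c; simp [Emat]
  set d : Fin (m + 1) → ℝ := fun j => A j - a j ^ 2 with hd
  set F : Finset (Fin m) → Matrix (Fin (m + 1)) (Fin (m + 1)) ℝ := fun t =>
    Matrix.of fun r c =>
      Fin.cases (a c)
        (fun s => if s ∈ t then d (i.succAbove s) * (Pi.single (i.succAbove s) (1 : ℝ) : Fin (m+1) → ℝ) c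
          else Emat a A (i.succAbove s).succ c.succ) r with hF
  -- The submatrix in the cofactor is F ∅
  have hsub : (Emat a A).submatrix i.succ.succAbove (0 : Fin (m + 2)).succAbove = F ∅ := by
    ext r c
    refine Fin.cases ?_ (fun s => ?_) r
    · simp [hF, Emat, Fin.zero_succAbove]
    · simp [hF, Fin.zero_succAbove, Fin.succ_succAbove_succ]
  -- row reduction
  have hstep : ∀ t : Finset (Fin m), (F t).det = (F ∅).det := by
    intro t
    induction t using Finset.induction_on with
    | empty => rfl
    | @insert s t hs ih =>
      have heq : F t = (F (insert s t)).updateRow s.succ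
          ((F (insert s t)) s.succ + a (i.succAbove s) • (F (insert s t)) 0) := by
        ext r c
        rcases eq_or_ne r s.succ with rfl | hr
        · rw [Matrix.updateRow_self]
          simp only [hF, Matrix.of_apply, Fin.cases_succ, Fin.cases_zero, Pi.add_apply,
            Pi.smul_apply, smul_eq_mul, if_neg hs, if_pos (Finset.mem_insert_self s t)]
          rw [hEs]
          rcases eq_or_ne (i.succAbove s) c with rfl | hc
          · rw [if_pos rfl, Pi.single_eq_same, hd]; ring
          · rw [if_neg hc, Pi.single_eq_of_ne' hc]; ring
        · rw [Matrix.updateRow_ne hr]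
          refine Fin.cases (motive := fun r => r ≠ s.succ →
              F t r c = F (insert s t) r c) ?_ (fun s' hs' => ?_) r hr
          · intro _; simp [hF]
          · have hne : s' ≠ s := fun h => hs' (by rw [h])
            simp [hF, Finset.mem_insert, hne]
      have h2 : (F t).det = (F (insert s t)).det := by
        rw [heq]; exact Matrix.det_updateRow_add_smul_self _ (Fin.succ_ne_zero s) _
      rw [← h2, ih]
  -- determinant of the fully reduced matrix
  have hdiag : (F Finset.univ).submatrix Fin.succ i.succAbove
      = Matrix.diagonal fun s => d (i.succAbove s) := by
    ext s c
    simp only [Matrix.submatrix_apply, hF, Matrix.of_apply, Fin.cases_succ,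
      if_pos (Finset.mem_univ s), Matrix.diagonal_apply]
    rcases eq_or_ne s c with rfl | hsc
    · rw [if_pos rfl, Pi.single_eq_same, mul_one]
    · rw [if_neg hsc,
        Pi.single_eq_of_ne (fun h => hsc (Fin.succAbove_right_injective h).symm), mul_zero]
  have hvanish : ∀ j : Fin (m + 1), j ≠ i →
      ((F Finset.univ).submatrix Fin.succ j.succAbove).det = 0 := by
    intro j hj
    obtain ⟨c, hc⟩ := Fin.exists_succAbove_eq (show i ≠ j from fun h => hj h.symm)
    refine Matrix.det_eq_zero_of_column_eq_zero c fun s => ?_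
    simp only [Matrix.submatrix_apply, hF, Matrix.of_apply, Fin.cases_succ,
      if_pos (Finset.mem_univ s), hc]
    rw [Pi.single_eq_of_ne (Fin.ne_succAbove i s), mul_zero]
  have hdetF : (F Finset.univ).det
      = (-1) ^ (i : ℕ) * a i * ∏ s : Fin m, d (i.succAbove s) := by
    rw [Matrix.det_succ_row_zero, Finset.sum_eq_single i]
    · rw [hdiag, Matrix.det_diagonal]
      have : (F Finset.univ) 0 i = a i := by simp [hF]
      rw [this]
    · intro j _ hj
      rw [hvanish j hj, mul_zero]
    · intro h; exact absurd (Finset.mem_univ i) h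
  -- product over erase
  have hprod : (∏ s : Fin m, d (i.succAbove s)) = ∏ j ∈ Finset.univ.erase i, d j := by
    refine Finset.prod_nbij (fun s => i.succAbove s) ?_ ?_ ?_ ?_
    · intro s _; exact Finset.mem_erase.2 ⟨Fin.succAbove_ne i s, Finset.mem_univ _⟩
    · intro x _ y _ h; exact Fin.succAbove_right_injective h
    · intro j hj
      obtain ⟨c, hc⟩ := Fin.exists_succAbove_eq (Finset.mem_erase.1 hj).1
      exact ⟨c, Finset.mem_coe.2 (Finset.mem_univ c), hc⟩
    · intro s _; rfl
  -- assemble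
  rw [cofactor, hsub, ← hstep Finset.univ, hdetF]
  have hidx : ((i.succ : Fin (m + 2)) : ℕ) + ((0 : Fin (m + 2)) : ℕ) = (i : ℕ) + 1 := by simp
  rw [hidx, ← hprod]
  have hsign : (-1 : ℝ) ^ ((i : ℕ) + 1) * (-1 : ℝ) ^ (i : ℕ) = -1 := by
    rw [← pow_add, show (i : ℕ) + 1 + i = 2 * i + 1 by ring, pow_succ, pow_mul]
    norm_num
  calc (-1 : ℝ) ^ ((i : ℕ) + 1) * ((-1) ^ (i : ℕ) * a i * ∏ s : Fin m, d (i.succAbove s))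
      = ((-1 : ℝ) ^ ((i : ℕ) + 1) * (-1) ^ (i : ℕ)) * (a i * ∏ s : Fin m, d (i.succAbove s)) := by
        ring
    _ = -a i * ∏ s : Fin m, d (i.succAbove s) := by rw [hsign]; ring
end

section
/- For any real numbers a_1,…,a_n and A_1,…,A_n, the cofactor C_{1,1} of the E_n-matrix equals ∏_{k=1}^n (A_k − a_k²) + Σ_{k=1}^n a_k² · ∏_{j≠k} (A_j − a_j²), where the inner product is over j ∈ {1,…,n} with j ≠ k. -/
open Finset

lemma prod_succAbove {n : ℕ} (d : Fin (n+1) → ℝ) (k : Fin (n+1)) :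
    ∏ i : Fin n, d (k.succAbove i) = ∏ j ∈ Finset.univ.erase k, d j := by
  refine Finset.prod_bij (fun i _ => k.succAbove i) ?_ ?_ ?_ ?_
  · intro i _; simp [Fin.succAbove_ne]
  · intro i _ j _ h; exact k.succAbove_right_injective h
  · intro j hj
    obtain ⟨z, hz⟩ := Fin.exists_succAbove_eq (Finset.ne_of_mem_erase hj)
    exact ⟨z, Finset.mem_univ z, hz⟩
  · intro i _; rfl

lemma detH {n : ℕ} (d u : Fin (n+1) → ℝ) (k : Fin (n+1)) :
    ((Matrix.diagonal d).updateRow k u).det = u k * ∏ j ∈ Finset.univ.erase k, d j := by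
  rw [Matrix.det_succ_row _ k]
  rw [Finset.sum_eq_single k]
  · rw [Matrix.updateRow_self]
    have : ((Matrix.diagonal d).updateRow k u).submatrix k.succAbove k.succAbove
        = Matrix.diagonal (d ∘ k.succAbove) := by
      rw [← Matrix.submatrix_diagonal d k.succAbove k.succAbove_right_injective]
      ext i j
      simp [Matrix.updateRow_ne (Fin.succAbove_ne k i)]
    rw [this, Matrix.det_diagonal, ← prod_succAbove d k]
    simp [mul_assoc]
  · intro j _ hj
    obtain ⟨z, hz⟩ := Fin.exists_succAbove_eq hj
    have h0 : (((Matrix.diagonal d)).submatrix k.succAbove j.succAbove).det = 0 := by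
      apply Matrix.det_eq_zero_of_row_eq_zero z
      intro j'
      simp only [Matrix.submatrix_apply, hz]
      exact Matrix.diagonal_apply_ne d (Fin.ne_succAbove j j')
    simp [h0]
  · simp

lemma det_diag_add_rank_one {n : ℕ} (a A : Fin (n+1) → ℝ) :
    (Matrix.of fun i j => if i = j then A i else a i * a j).det =
      (∏ k, (A k - a k ^ 2)) +
        ∑ k, a k ^ 2 * ∏ j ∈ Finset.univ.erase k, (A j - a j ^ 2) := by
  set c : Fin (n+1) → ℝ := fun i => A i - a i ^ 2 with hc
  set g : Fin (n+1) → Fin (n+1) → ℝ := fun i => c i • (Pi.single i 1 : Fin (n+1) → ℝ) with hgdef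
  set h : Fin (n+1) → Fin (n+1) → ℝ := fun i => a i • a with hhdef
  have hg : (g : Matrix (Fin (n+1)) (Fin (n+1)) ℝ) = Matrix.diagonal c := by
    ext i j
    by_cases hij : i = j <;>
      simp [hgdef, Pi.single_apply, Matrix.diagonal_apply, hij, eq_comm]
  have hM : (Matrix.of fun i j => if i = j then A i else a i * a j) = h + g := by
    ext i j
    by_cases hij : i = j
    · simp [hhdef, hgdef, Pi.single_apply, hij, hc, eq_comm]; ring
    · simp [hhdef, hgdef, Pi.single_apply, hij, hc, eq_comm]
  set f := (Matrix.detRowAlternating : (Fin (n+1) → ℝ) [⋀^Fin (n+1)]→ₗ[ℝ] ℝ)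
    with hf
  have hdet : (Matrix.of fun i j => if i = j then A i else a i * a j).det = f (h + g) := by
    rw [hM]; rfl
  have hexp := f.toMultilinearMap.map_add_univ h g
  simp only [AlternatingMap.coe_multilinearMap] at hexp
  rw [hdet, hexp]
  set T : Finset (Finset (Fin (n+1))) :=
    insert ∅ (Finset.univ.image fun k : Fin (n+1) => ({k} : Finset (Fin (n+1)))) with hT
  rw [← Finset.sum_subset (Finset.subset_univ T)]
  · rw [hT, Finset.sum_insert (by simp)]
    rw [Finset.sum_image (by intro x _ y _ hxy; simpa using hxy)]
    congr 1
    · rw [Finset.piecewise_empty, hg]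
      rw [show f (Matrix.diagonal c) = (Matrix.diagonal c).det from rfl, Matrix.det_diagonal]
    · refine Finset.sum_congr rfl fun k _ => ?_
      rw [Finset.piecewise_singleton]
      have : h k = a k • a := rfl
      rw [this]
      have h1 : f (Function.update g k (a k • a)) = a k • f (Function.update g k a) :=
        f.map_update_smul g k (a k) a
      have h2 : Function.update g k a = (Matrix.diagonal c).updateRow k a := by
        rw [← hg]; rfl
      rw [h1, h2]
      show a k * ((Matrix.diagonal c).updateRow k a).det = _
      rw [detH]
      ring
  · intro s _ hs
    have hcard : 1 < s.card := by
      rcases Nat.lt_or_ge 1 s.card with h' | h'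
      · exact h'
      · exfalso
        interval_cases hh : s.card
        · exact hs (by simp [hT, Finset.card_eq_zero.mp hh])
        · obtain ⟨x, hx⟩ := Finset.card_eq_one.mp hh
          exact hs (by simp [hT, hx])
    obtain ⟨i, hi, i', hi', hii'⟩ := Finset.one_lt_card.mp hcard
    have hmi : s.piecewise h g i = a i • a := Finset.piecewise_eq_of_mem _ _ _ hi
    have hmi' : Function.update (s.piecewise h g) i a i' = a i' • a := by
      rw [Function.update_of_ne (Ne.symm hii')]
      exact Finset.piecewise_eq_of_mem _ _ _ hi'
    calc f (s.piecewise h g)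
        = f (Function.update (s.piecewise h g) i (a i • a)) := by
          rw [← hmi, Function.update_eq_self]
      _ = a i • f (Function.update (s.piecewise h g) i a) := by
          rw [f.map_update_smul]
      _ = a i • f (Function.update (Function.update (s.piecewise h g) i a) i'
            (a i' • a)) := by
          rw [show Function.update (Function.update (s.piecewise h g) i a) i'
            (a i' • a) = Function.update (s.piecewise h g) i a from ?_]
          · rw [← hmi']
            have : Function.update (s.piecewise h g) i a i'
                = (s.piecewise h g) i' := Function.update_of_ne (Ne.symm hii') _ _
            rw [Function.update_eq_self]
      _ = a i • (a i' • f (Function.update (Function.update (s.piecewise h g) i a) i' a)) := by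
          rw [f.map_update_smul]
      _ = 0 := by
          rw [f.map_eq_zero_of_eq _ (i := i) (j := i') ?_ hii'] <;> simp
          rw [Function.update_of_ne hii', Function.update_self]

/-- The cofactor `C_{1,1}` of the `E_n`-matrix equals
`∏_{k=1}^n (A_k − a_k²) + Σ_{k=1}^n a_k² · ∏_{j≠k} (A_j − a_j²)`. -/
theorem Emat_cofactor_one_one {n : ℕ} (a A : Fin n → ℝ) :
    cofactor (Emat a A) 0 0 =
      (∏ k : Fin n, (A k - a k ^ 2)) +
        ∑ k : Fin n, a k ^ 2 * ∏ j ∈ Finset.univ.erase k, (A j - a j ^ 2) := by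
  have hsub : (Emat a A).submatrix (0 : Fin (n+1)).succAbove (0 : Fin (n+1)).succAbove
      = Matrix.of fun i j => if i = j then A i else a i * a j := by
    ext i j
    simp [Emat, Fin.zero_succAbove]
  rw [cofactor, hsub]
  simp only [Fin.val_zero, add_zero, pow_zero, one_mul]
  obtain _ | n := n
  · simp [Matrix.det_fin_zero]
  · exact det_diag_add_rank_one a A
end

section
/- Let p ≥ 1 and let μ_1,…,μ_p, s_1,…,s_p, x_1,…,x_p, r̃ be real numbers with σ_j² := s_j − μ_j² ≠ 0 for each j. Then the (p+1)-vector (v_0, v_1, …, v_p) given by v_0 = r̃·[1 − p + Σ_{j=1}^p (s_j − x_j μ_j)/σ_j²] and v_j = r̃·(x_j − μ_j)/σ_j² for 1 ≤ j ≤ p is the unique solution of the linear system: v_0 + Σ_{j=1}^p v_j μ_j = r̃, and for each i ∈ {1,…,p}: v_0 μ_i + v_i s_i + Σ_{j≠i} v_j μ_i μ_j = x_i r̃. -/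
open Finset

/-- For `p ≥ 1` and real numbers `μ_j, s_j, x_j, r̃` with `σ_j² = s_j − μ_j² ≠ 0`, the vector
`(v_0, v_1, …, v_p)` with `v_0 = r̃·[1 − p + Σ_j (s_j − x_j μ_j)/σ_j²]` and
`v_j = r̃·(x_j − μ_j)/σ_j²` is the unique solution of the linear system
`v_0 + Σ_j v_j μ_j = r̃` and, for each `i`, `v_0 μ_i + v_i s_i + Σ_{j≠i} v_j μ_i μ_j = x_i r̃`. -/
theorem influence_system_unique_solution
    (p : ℕ) (hp : 1 ≤ p) (μ s x : Fin p → ℝ) (r : ℝ)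
    (hσ : ∀ j, s j - μ j ^ 2 ≠ 0) :
    (((r * ((1 : ℝ) - (p : ℝ) + ∑ j, (s j - x j * μ j) / (s j - μ j ^ 2))) +
        ∑ j, (r * (x j - μ j) / (s j - μ j ^ 2)) * μ j = r) ∧
      (∀ i, (r * ((1 : ℝ) - (p : ℝ) + ∑ j, (s j - x j * μ j) / (s j - μ j ^ 2))) * μ i +
          (r * (x i - μ i) / (s i - μ i ^ 2)) * s i +
          ∑ j ∈ Finset.univ.erase i, (r * (x j - μ j) / (s j - μ j ^ 2)) * μ i * μ j
        = x i * r)) ∧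
    (∀ (w₀ : ℝ) (w : Fin p → ℝ),
      (w₀ + ∑ j, w j * μ j = r ∧
        ∀ i, w₀ * μ i + w i * s i + ∑ j ∈ Finset.univ.erase i, w j * μ i * μ j = x i * r) →
      w₀ = r * ((1 : ℝ) - (p : ℝ) + ∑ j, (s j - x j * μ j) / (s j - μ j ^ 2)) ∧
        ∀ j, w j = r * (x j - μ j) / (s j - μ j ^ 2)) := by
  have key : ∀ j : Fin p, (s j - x j * μ j) / (s j - μ j ^ 2)
      + (x j - μ j) / (s j - μ j ^ 2) * μ j = 1 := by
    intro j
    rw [div_mul_eq_mul_div, ← add_div, div_eq_one_iff_eq (hσ j)]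
    ring
  have sumkey : (∑ j, (s j - x j * μ j) / (s j - μ j ^ 2))
      + ∑ j, (x j - μ j) / (s j - μ j ^ 2) * μ j = (p : ℝ) := by
    rw [← Finset.sum_add_distrib]
    simp [key]
  have hS : ∑ j, (r * (x j - μ j) / (s j - μ j ^ 2)) * μ j
      = r * ∑ j, (x j - μ j) / (s j - μ j ^ 2) * μ j := by
    rw [Finset.mul_sum]
    exact Finset.sum_congr rfl fun j _ => by ring
  have hB : ∑ j, (x j - μ j) / (s j - μ j ^ 2) * μ j
      = (p : ℝ) - ∑ j, (s j - x j * μ j) / (s j - μ j ^ 2) := by linarith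
  have eq1 : (r * ((1 : ℝ) - (p : ℝ) + ∑ j, (s j - x j * μ j) / (s j - μ j ^ 2))) +
      ∑ j, (r * (x j - μ j) / (s j - μ j ^ 2)) * μ j = r := by
    rw [hS, hB]; ring
  refine ⟨⟨eq1, ?_⟩, ?_⟩
  · intro i
    have hv : (r * (x i - μ i) / (s i - μ i ^ 2)) * (s i - μ i ^ 2) = r * (x i - μ i) :=
      div_mul_cancel₀ _ (hσ i)
    have hE : ∑ j ∈ Finset.univ.erase i, (r * (x j - μ j) / (s j - μ j ^ 2)) * μ i * μ j
        = μ i * (∑ j, (r * (x j - μ j) / (s j - μ j ^ 2)) * μ j)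
          - (r * (x i - μ i) / (s i - μ i ^ 2)) * μ i * μ i := by
      rw [Finset.sum_erase_eq_sub (Finset.mem_univ i), Finset.mul_sum]
      congr 1
      exact Finset.sum_congr rfl fun j _ => by ring
    rw [hE]
    linear_combination μ i * eq1 + hv
  · rintro w₀ w ⟨h1, h2⟩
    have hw : ∀ i, w i = r * (x i - μ i) / (s i - μ i ^ 2) := by
      intro i
      have h2i := h2 i
      rw [Finset.sum_erase_eq_sub (Finset.mem_univ i)] at h2i
      have hs : ∑ j, w j * μ i * μ j = μ i * ∑ j, w j * μ j := by
        rw [Finset.mul_sum]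
        exact Finset.sum_congr rfl fun j _ => by ring
      rw [hs] at h2i
      rw [eq_div_iff (hσ i)]
      linear_combination h2i - μ i * h1
    have hsum : ∑ j, w j * μ j = ∑ j, (r * (x j - μ j) / (s j - μ j ^ 2)) * μ j :=
      Finset.sum_congr rfl fun j _ => by rw [hw j]
    refine ⟨?_, hw⟩
    have := h1
    rw [hsum, hS, hB] at this
    linarith
end

section
/- Let p ≥ 1, let μ_1,…,μ_p, s_1,…,s_p, β_0, β_1,…,β_p, y be real numbers with σ_j² := s_j − μ_j² ≠ 0 for each j, and define on ℝ^p: r_2(x) = y − β_0 − Σ_{j=1}^p β_j x_j, IF_0(x) = r_2(x)·[1 − p + Σ_{j=1}^p (s_j − x_j μ_j)/σ_j²], and IF_j(x) = r_2(x)·(x_j − μ_j)/σ_j² for 1 ≤ j ≤ p. Then for every x ∈ ℝ^p and every i ∈ {1,…,p}: IF_i(x) + ∂IF_0/∂x_i(x) + Σ_{j=1}^p x_j · ∂IF_j/∂x_i(x) = 2·r_2(x)·(x_i − μ_i)/σ_i² − β_i·[1 + Σ_{j=1}^p (x_j − μ_j)²/σ_j²]. -/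
open Finset

/-- For the `L_2`-regression influence functions `IF_0(x) = r_2(x)·[1 − p + Σ_j (s_j − x_j μ_j)/σ_j²]`
and `IF_j(x) = r_2(x)·(x_j − μ_j)/σ_j²`, with `r_2(x) = y − β_0 − Σ_j β_j x_j`, one has, for
every `x` and every `i`, `IF_i(x) + ∂IF_0/∂x_i(x) + Σ_j x_j · ∂IF_j/∂x_i(x)
= 2·r_2(x)·(x_i − μ_i)/σ_i² − β_i·[1 + Σ_j (x_j − μ_j)²/σ_j²]`. -/
theorem L2_influence_derivative_sum
    (p : ℕ) (hp : 1 ≤ p) (μ s : Fin p → ℝ) (β₀ y : ℝ) (β : Fin p → ℝ)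
    (hσ : ∀ j, s j - μ j ^ 2 ≠ 0)
    (r₂ : (Fin p → ℝ) → ℝ)
    (hr₂ : ∀ x, r₂ x = y - β₀ - ∑ j, β j * x j)
    (IF₀ : (Fin p → ℝ) → ℝ) (IF : Fin p → (Fin p → ℝ) → ℝ)
    (hIF₀ : ∀ x, IF₀ x = r₂ x * ((1 : ℝ) - (p : ℝ) + ∑ j, (s j - x j * μ j) / (s j - μ j ^ 2)))
    (hIF : ∀ j x, IF j x = r₂ x * (x j - μ j) / (s j - μ j ^ 2)) :
    ∀ (x : Fin p → ℝ) (i : Fin p),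
      IF i x + fderiv ℝ IF₀ x (Pi.single i 1) + ∑ j, x j * fderiv ℝ (IF j) x (Pi.single i 1)
        = 2 * r₂ x * (x i - μ i) / (s i - μ i ^ 2)
          - β i * (1 + ∑ j, (x j - μ j) ^ 2 / (s j - μ j ^ 2)) := by
  have hr₂' : r₂ = fun x => y - β₀ - ∑ j, β j * x j := funext hr₂
  subst hr₂'
  have hIF₀' : IF₀ = fun x => (y - β₀ - ∑ j, β j * x j) *
      ((1 : ℝ) - (p : ℝ) + ∑ j, (s j - x j * μ j) / (s j - μ j ^ 2)) := funext hIF₀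
  subst hIF₀'
  have hIF' : IF = fun j x => (y - β₀ - ∑ k, β k * x k) * (x j - μ j) / (s j - μ j ^ 2) :=
    funext fun j => funext fun x => hIF j x
  subst hIF'
  intro x i
  have hr : HasFDerivAt (fun x : Fin p → ℝ => y - β₀ - ∑ j, β j * x j)
      (0 - ∑ j, β j • (ContinuousLinearMap.proj j : (Fin p → ℝ) →L[ℝ] ℝ)) x :=
    (hasFDerivAt_const _ _).sub (HasFDerivAt.fun_sum fun j _ =>
      (hasFDerivAt_apply j x).const_mul (β j))
  have hg : HasFDerivAt (fun x : Fin p → ℝ =>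
      (1 : ℝ) - (p : ℝ) + ∑ j, (s j - x j * μ j) / (s j - μ j ^ 2))
      (0 + ∑ j, (s j - μ j ^ 2)⁻¹ •
        ((0 : (Fin p → ℝ) →L[ℝ] ℝ) - μ j • ContinuousLinearMap.proj j)) x := by
    refine (hasFDerivAt_const _ _).add (HasFDerivAt.fun_sum fun j _ => ?_)
    have h1 : HasFDerivAt (fun x : Fin p → ℝ => s j - x j * μ j)
        ((0 : (Fin p → ℝ) →L[ℝ] ℝ) - μ j • ContinuousLinearMap.proj j) x := by
      have h2 : HasFDerivAt (fun x : Fin p → ℝ => x j * μ j)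
          (μ j • (ContinuousLinearMap.proj j : (Fin p → ℝ) →L[ℝ] ℝ)) x := by
        simpa [mul_comm] using (hasFDerivAt_apply j x).const_mul (μ j)
      exact (hasFDerivAt_const _ _).sub h2
    simpa [div_eq_inv_mul] using h1.const_mul (s j - μ j ^ 2)⁻¹
  have hD₀ := hr.fun_mul hg
  have hDj : ∀ j : Fin p, HasFDerivAt
      (fun x : Fin p → ℝ => (y - β₀ - ∑ k, β k * x k) * (x j - μ j) / (s j - μ j ^ 2))
      ((s j - μ j ^ 2)⁻¹ •
        ((y - β₀ - ∑ k, β k * x k) • (ContinuousLinearMap.proj j : (Fin p → ℝ) →L[ℝ] ℝ)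
          + (x j - μ j) • (0 - ∑ k, β k • (ContinuousLinearMap.proj k : (Fin p → ℝ) →L[ℝ] ℝ)))) x := by
    intro j
    have h2 : HasFDerivAt (fun x : Fin p → ℝ => x j - μ j)
        (ContinuousLinearMap.proj j : (Fin p → ℝ) →L[ℝ] ℝ) x := by
      simpa using (hasFDerivAt_apply j x).sub_const (μ j)
    have h3 := (hr.mul h2).const_mul (s j - μ j ^ 2)⁻¹
    simp only [div_eq_inv_mul]
    simpa [mul_comm] using h3
  have happ : ∀ j : Fin p, fderiv ℝ
      (fun x : Fin p → ℝ => (y - β₀ - ∑ k, β k * x k) * (x j - μ j) / (s j - μ j ^ 2)) x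
      (Pi.single i 1)
      = (s j - μ j ^ 2)⁻¹ * ((y - β₀ - ∑ k, β k * x k) * (if j = i then (1:ℝ) else 0)
          - (x j - μ j) * β i) := by
    intro j
    rw [(hDj j).fderiv]
    simp [Pi.single_apply, mul_ite, Finset.sum_ite_eq', mul_comm, sub_eq_add_neg, mul_assoc]
    split_ifs <;> ring
  have happ0 : fderiv ℝ
      (fun x : Fin p → ℝ => (y - β₀ - ∑ j, β j * x j) *
        ((1 : ℝ) - (p : ℝ) + ∑ j, (s j - x j * μ j) / (s j - μ j ^ 2))) x (Pi.single i 1)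
      = (y - β₀ - ∑ k, β k * x k) * (-(μ i) * (s i - μ i ^ 2)⁻¹)
        - ((1 : ℝ) - (p : ℝ) + ∑ j, (s j - x j * μ j) / (s j - μ j ^ 2)) * β i := by
    rw [hD₀.fderiv]
    simp [Pi.single_apply, mul_ite, Finset.sum_ite_eq', mul_comm, sub_eq_add_neg, mul_assoc]
  rw [happ0]
  simp only [happ]
  have key : ∑ j, (s j - x j * μ j) / (s j - μ j ^ 2)
      + ∑ j, x j * (x j - μ j) / (s j - μ j ^ 2)
      = (p : ℝ) + ∑ j, (x j - μ j) ^ 2 / (s j - μ j ^ 2) := by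
    rw [← Finset.sum_add_distrib,
      Finset.sum_congr rfl (fun j _ => show (s j - x j * μ j) / (s j - μ j ^ 2)
        + x j * (x j - μ j) / (s j - μ j ^ 2) = 1 + (x j - μ j) ^ 2 / (s j - μ j ^ 2) by
          field_simp [hσ j]
          ring),
      Finset.sum_add_distrib]
    simp [Finset.card_univ]
  have hsum : ∑ j, x j * ((s j - μ j ^ 2)⁻¹ *
        ((y - β₀ - ∑ k, β k * x k) * (if j = i then (1:ℝ) else 0) - (x j - μ j) * β i))
      = x i * (s i - μ i ^ 2)⁻¹ * (y - β₀ - ∑ k, β k * x k)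
        - β i * ∑ j, x j * (x j - μ j) / (s j - μ j ^ 2) := by
    simp only [mul_sub, mul_ite, mul_zero, Finset.sum_sub_distrib, Finset.sum_ite_eq',
      Finset.mem_univ, if_true, Finset.mul_sum, div_eq_mul_inv]
    congr 1
    · have hms : ∑ k, x i * (s i - μ i ^ 2)⁻¹ * (β k * x k)
          = x i * (s i - μ i ^ 2)⁻¹ * ∑ k, β k * x k := by
        rw [Finset.mul_sum]
      rw [hms]
      ring
    · exact Finset.sum_congr rfl fun j _ => by ring
  rw [hsum]
  have hi := hσ i
  field_simp
  linear_combination (-(β i) * (s i - μ i ^ 2)) * key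
end

section
/- Let p ≥ 1, ε > 0, and let μ_1,…,μ_p, s_1,…,s_p, β_0, β_1,…,β_p, y be real numbers with σ_j² := s_j − μ_j² > 0 for each j. Define for x ∈ ℝ^p: r_2(x) = y − β_0 − Σ_{j=1}^p β_j x_j and RINFIN(x) = ε · Σ_{i=1}^p | 2·r_2(x)·(x_i − μ_i)/σ_i² − β_i·[1 + Σ_{j=1}^p (x_j − μ_j)²/σ_j²] |. Fix an index i with β_i ≠ 0 and fix all coordinates x_j with j ≠ i. Then RINFIN(x) tends to +∞ as |x_i| → ∞ (i.e., the function t ↦ RINFIN of the point whose i-th coordinate is t tends to +∞ along the filter where |t| → ∞). -/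
open Finset Filter

lemma abs_quadratic_tendsto (a b c : ℝ) (ha : a ≠ 0) :
    Tendsto (fun t : ℝ => |a * t ^ 2 + b * t + c|) (comap (fun t : ℝ => |t|) atTop) atTop := by
  set d : ℝ := b / (2 * a) with hd
  set e : ℝ := c - a * d ^ 2 with he
  have hfd : ∀ t : ℝ, a * t ^ 2 + b * t + c = a * (t + d) ^ 2 + e := by
    intro t
    rw [he, hd]
    field_simp
    ring
  have habs : Tendsto (fun t : ℝ => |t|) (comap (fun t : ℝ => |t|) atTop) atTop :=
    tendsto_comap
  have h1 : Tendsto (fun t : ℝ => |t + d|) (comap (fun t : ℝ => |t|) atTop) atTop := by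
    refine tendsto_atTop_mono (fun t => ?_)
      (tendsto_atTop_add_const_right _ (-|d|) habs)
    have := abs_sub_abs_le_abs_sub t (-d)
    simp only [sub_neg_eq_add, abs_neg] at this
    linarith
  have h2 : Tendsto (fun t : ℝ => (t + d) ^ 2) (comap (fun t : ℝ => |t|) atTop) atTop := by
    exact ((tendsto_pow_atTop (two_ne_zero)).comp h1).congr fun t => sq_abs (t + d)
  have h3 : Tendsto (fun t : ℝ => |a| * (t + d) ^ 2 - |e|)
      (comap (fun t : ℝ => |t|) atTop) atTop :=
    tendsto_atTop_add_const_right _ (-|e|) (h2.const_mul_atTop (abs_pos.mpr ha)) |>.congr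
      (fun t => by ring)
  refine tendsto_atTop_mono (fun t => ?_) h3
  rw [hfd]
  have := abs_sub_abs_le_abs_sub (a * (t + d) ^ 2) (-e)
  simp only [sub_neg_eq_add, abs_neg, abs_mul, abs_pow, sq_abs] at this
  linarith

/-- With `r_2(x) = y − β_0 − Σ_j β_j x_j` and
`RINFIN(x) = ε · Σ_i |2·r_2(x)·(x_i − μ_i)/σ_i² − β_i·[1 + Σ_j (x_j − μ_j)²/σ_j²]|`,
if `β_i ≠ 0` and all coordinates `x_j`, `j ≠ i`, are fixed, then `RINFIN` tends to `+∞` as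
`|x_i| → ∞`. -/
theorem RINFIN_tendsto_atTop
    (p : ℕ) (hp : 1 ≤ p) (ε : ℝ) (hε : 0 < ε)
    (μ s : Fin p → ℝ) (β₀ y : ℝ) (β : Fin p → ℝ)
    (hσ : ∀ j, 0 < s j - μ j ^ 2)
    (r₂ : (Fin p → ℝ) → ℝ)
    (hr₂ : ∀ x, r₂ x = y - β₀ - ∑ j, β j * x j)
    (RINFIN : (Fin p → ℝ) → ℝ)
    (hR : ∀ x, RINFIN x = ε * ∑ i,
      |2 * r₂ x * (x i - μ i) / (s i - μ i ^ 2)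
        - β i * (1 + ∑ j, (x j - μ j) ^ 2 / (s j - μ j ^ 2))|)
    (i : Fin p) (hβ : β i ≠ 0) (x : Fin p → ℝ) :
    Tendsto (fun t : ℝ => RINFIN (Function.update x i t))
      (comap (fun t : ℝ => |t|) atTop) atTop := by
  set σ : ℝ := s i - μ i ^ 2 with hσi
  have hσ0 : σ ≠ 0 := ne_of_gt (hσ i)
  set K : ℝ := y - β₀ - ∑ j ∈ univ.erase i, β j * x j with hK
  set S : ℝ := ∑ j ∈ univ.erase i, (x j - μ j) ^ 2 / (s j - μ j ^ 2) with hS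
  set a : ℝ := -3 * β i / σ with ha
  set b : ℝ := (2 * K + 4 * β i * μ i) / σ with hb
  set c : ℝ := (-2 * K * μ i - β i * μ i ^ 2) / σ - β i * (1 + S) with hc
  have ha0 : a ≠ 0 := by
    rw [ha]
    exact div_ne_zero (by simpa using hβ) hσ0
  have hsum1 : ∀ t : ℝ, ∑ j, β j * Function.update x i t j
      = β i * t + ∑ j ∈ univ.erase i, β j * x j := by
    intro t
    rw [← Finset.add_sum_erase _ _ (mem_univ i), Function.update_self]
    congr 1
    refine Finset.sum_congr rfl (fun j hj => ?_)
    rw [Function.update_of_ne (Finset.ne_of_mem_erase hj)]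
  have hsum2 : ∀ t : ℝ, ∑ j, (Function.update x i t j - μ j) ^ 2 / (s j - μ j ^ 2)
      = (t - μ i) ^ 2 / σ + S := by
    intro t
    rw [← Finset.add_sum_erase _ _ (mem_univ i), Function.update_self]
    congr 1
    refine Finset.sum_congr rfl (fun j hj => ?_)
    rw [Function.update_of_ne (Finset.ne_of_mem_erase hj)]
  have key : ∀ t : ℝ,
      2 * r₂ (Function.update x i t) * (Function.update x i t i - μ i) / σ
        - β i * (1 + ∑ j, (Function.update x i t j - μ j) ^ 2 / (s j - μ j ^ 2))
      = a * t ^ 2 + b * t + c := by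
    intro t
    rw [hr₂, hsum1, hsum2, Function.update_self, ha, hb, hc, hK]
    field_simp
    ring
  have hlb : ∀ t : ℝ, ε * |a * t ^ 2 + b * t + c| ≤ RINFIN (Function.update x i t) := by
    intro t
    rw [hR]
    refine mul_le_mul_of_nonneg_left ?_ hε.le
    rw [← key t]
    exact Finset.single_le_sum (f := fun k =>
      |2 * r₂ (Function.update x i t) * (Function.update x i t k - μ k) / (s k - μ k ^ 2)
        - β k * (1 + ∑ j, (Function.update x i t j - μ j) ^ 2 / (s j - μ j ^ 2))|)
      (fun k _ => abs_nonneg _) (mem_univ i)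
  exact tendsto_atTop_mono hlb ((abs_quadratic_tendsto a b c ha0).const_mul_atTop hε)
end
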